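/- Let C be a finite abelian group isomorphic to Z/9Z × Z/3Z and let σ be an automorphism of C such that the fixed-point subgroup C^σ = {c ∈ C : σ(c) = c} equals the subgroup C^3 = {c^3 : c ∈ C} of cubes. Then the image of the endomorphism c ↦ c · σ(c)^{-1} is a subgroup of order 9 that is elementary abelian of type (3,3). -/
import Mathlib

private lemma aux9 {G : Type*} [CommGroup G] (h9 : Nat.card G = 9) (h3 : ∀ x : G, x ^ 3 = 1) :
    Nonempty (G ≃* Multiplicative (ZMod 3 × ZMod 3)) := by
  have hfin : Finite G := Nat.finite_of_card_ne_zero (by omega)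
  letI : Module (ZMod 3) (Additive G) :=
    AddCommGroup.zmodModule (by intro x; exact h3 x.toMul)
  haveI : Fintype G := Fintype.ofFinite G
  have hc : Fintype.card (Additive G) = 3 ^ Module.finrank (ZMod 3) (Additive G) := by
    simpa using Module.card_eq_pow_finrank (K := ZMod 3) (V := Additive G)
  have hcard : Fintype.card (Additive G) = 9 := by
    rw [← h9, Nat.card_eq_fintype_card]; exact Fintype.card_congr Additive.toMul
  have hrk : Module.finrank (ZMod 3) (Additive G) = 2 := by
    have : (3:ℕ) ^ Module.finrank (ZMod 3) (Additive G) = 3 ^ 2 := by omega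
    exact Nat.pow_right_injective (by norm_num) this
  let b := Module.finBasis (ZMod 3) (Additive G)
  rw [hrk] at b
  let e1 : Additive G ≃ₗ[ZMod 3] (Fin 2 → ZMod 3) := b.equivFun
  let e2 : (Fin 2 → ZMod 3) ≃ₗ[ZMod 3] ZMod 3 × ZMod 3 := LinearEquiv.finTwoArrow (ZMod 3) (ZMod 3)
  exact ⟨(MulEquiv.multiplicativeAdditive G).symm.trans
    (AddEquiv.toMultiplicative ((e1.trans e2).toAddEquiv))⟩

/-- If `C ≅ Z/9 × Z/3` and `σ` is an automorphism whose fixed subgroup equals the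
subgroup of cubes, then the image of `c ↦ c * (σ c)⁻¹` has order 9 and is
elementary abelian of type (3,3). -/
theorem stmt3 {C : Type*} [CommGroup C]
    (_h : Nonempty (C ≃* Multiplicative (ZMod 9 × ZMod 3)))
    (σ : C ≃* C)
    (hfix : {c : C | σ c = c} = {c : C | ∃ d : C, d ^ 3 = c})
    (φ : C →* C) (hφ : ∀ c : C, φ c = c * (σ c)⁻¹) :
    Nat.card φ.range = 9 ∧
      Nonempty (φ.range ≃* Multiplicative (ZMod 3 × ZMod 3)) := by
  obtain ⟨e⟩ := _h
  set M := Multiplicative (ZMod 9 × ZMod 3)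
  have cardC : Nat.card C = 27 := by
    rw [Nat.card_congr e.toEquiv, Nat.card_eq_fintype_card]; decide
  -- kernel equals the set of cubes
  have hker : (φ.ker : Set C) = {c : C | ∃ d : C, d ^ 3 = c} := by
    rw [← hfix]
    ext c
    simp only [SetLike.mem_coe, MonoidHom.mem_ker, hφ, Set.mem_setOf_eq, mul_inv_eq_one]
    exact ⟨fun h => h.symm, fun h => h.symm⟩
  have cubeEquiv : {c : C | ∃ d : C, d ^ 3 = c} ≃ {x : M | ∃ d : M, d ^ 3 = x} :=
    e.toEquiv.subtypeEquiv (by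
      intro c
      constructor
      · rintro ⟨d, rfl⟩; exact ⟨e d, by rw [← map_pow]; rfl⟩
      · rintro ⟨d, hd⟩; exact ⟨e.symm d, by
          apply e.injective; rw [map_pow]; simp [hd]⟩)
  have cardCubesM : Nat.card {x : M | ∃ d : M, d ^ 3 = x} = 3 := by
    rw [Nat.card_eq_fintype_card]; decide
  have cardKer : Nat.card φ.ker = 3 := by
    have : Nat.card φ.ker = Nat.card {c : C | ∃ d : C, d ^ 3 = c} :=
      Nat.card_congr (Equiv.setCongr hker)
    rw [this, Nat.card_congr cubeEquiv, cardCubesM]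
  have cardRange : Nat.card φ.range = 9 := by
    have h1 : Nat.card C = Nat.card (C ⧸ φ.ker) * Nat.card φ.ker :=
      Subgroup.card_eq_card_quotient_mul_card_subgroup φ.ker
    have h2 : Nat.card (C ⧸ φ.ker) = Nat.card φ.range :=
      Nat.card_congr (QuotientGroup.quotientKerEquivRange φ).toEquiv
    rw [cardC, cardKer, h2] at h1
    omega
  refine ⟨cardRange, aux9 cardRange ?_⟩
  rintro ⟨x, c, rfl⟩
  have hcube : σ (c ^ 3) = c ^ 3 := by
    have : c ^ 3 ∈ {c : C | σ c = c} := hfix ▸ ⟨c, rfl⟩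
    exact this
  have : (φ c) ^ 3 = 1 := by
    rw [← map_pow, hφ, hcube, mul_inv_cancel]
  exact Subtype.ext (by simpa using this)
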